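/- Let H₀ > 0 and m ≠ 0, and let φ : ℝ → ℝ be twice continuously differentiable satisfying φ''(t) + 3H₀·φ'(t) + m² = 0 for all t. Then φ is unbounded on (−∞, 0]; that is, for every M > 0 there exists t ≤ 0 with |φ(t)| > M. -/

import Mathlib

open Real

theorem perturbation_unbounded_in_past
    (H₀ m : ℝ) (hH : H₀ > 0) (hm : m ≠ 0)
    (φ : ℝ → ℝ) (hφ : ContDiff ℝ 2 φ)
    (heq : ∀ t : ℝ, deriv (deriv φ) t + 3 * H₀ * deriv φ t + m ^ 2 = 0) :
    ∀ M : ℝ, M > 0 → ∃ t : ℝ, t ≤ 0 ∧ |φ t| > M := by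
  intro M hM
  have hH0 : (3:ℝ) * H₀ ≠ 0 := by positivity
  set k : ℝ := m ^ 2 / (3 * H₀) with hk
  clear_value k
  have hk0 : 0 < k := by
    rw [hk]; exact div_pos (by positivity) (by linarith)
  have hd2 : Differentiable ℝ (deriv φ) := by
    have h : ContDiff ℝ ((1:ℕ∞)+1) φ := by exact_mod_cast hφ
    exact ((contDiff_succ_iff_deriv.mp h).2.2).differentiable (by norm_num)
  have hd1 : Differentiable ℝ φ := hφ.differentiable (by norm_num)
  -- first integral: exp(3H₀ s) * (φ' s + k) is constant
  have hgd : ∀ s, HasDerivAt (fun s => Real.exp (3 * H₀ * s) * (deriv φ s + k)) 0 s := by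
    intro s
    have h0 : HasDerivAt (fun s : ℝ => 3 * H₀ * s) (3 * H₀) s := by
      simpa using (hasDerivAt_id s).const_mul (3 * H₀)
    have e1 : HasDerivAt (fun s => Real.exp (3 * H₀ * s)) (Real.exp (3 * H₀ * s) * (3 * H₀)) s :=
      (Real.hasDerivAt_exp _).comp s h0
    have e2 : HasDerivAt (fun s => deriv φ s + k) (deriv (deriv φ) s) s :=
      ((hd2 s).hasDerivAt).add_const k
    have := e1.mul e2
    refine this.congr_deriv ?_
    have h3 : 3 * H₀ * k = m ^ 2 := by rw [hk]; field_simp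
    have h := heq s
    linear_combination (Real.exp (3 * H₀ * s)) * h + Real.exp (3 * H₀ * s) * h3
  set C : ℝ := deriv φ 0 + k with hC
  have hg : ∀ t, deriv φ t = C * Real.exp (-(3 * H₀ * t)) - k := by
    intro t
    have hconst := is_const_of_deriv_eq_zero
      (f := fun s => Real.exp (3 * H₀ * s) * (deriv φ s + k))
      (fun s => (hgd s).differentiableAt) (fun s => (hgd s).deriv) t 0
    simp only [mul_zero, Real.exp_zero, one_mul] at hconst
    have hne : Real.exp (3 * H₀ * t) ≠ 0 := Real.exp_ne_zero _
    have : deriv φ t + k = C * Real.exp (-(3 * H₀ * t)) := by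
      rw [Real.exp_neg]
      field_simp
      linarith [hconst]
    linarith
  -- second integral: φ t + (C/(3H₀)) exp(-3H₀ t) + k t is constant
  set A : ℝ := C / (3 * H₀) with hA
  have hhd : ∀ s, HasDerivAt (fun s => φ s + A * Real.exp (-(3 * H₀ * s)) + k * s) 0 s := by
    intro s
    have h0 : HasDerivAt (fun s : ℝ => -(3 * H₀ * s)) (-(3 * H₀)) s := by
      simpa using (hasDerivAt_id s).const_mul (-(3 * H₀))
    have e1 : HasDerivAt (fun s => Real.exp (-(3 * H₀ * s)))
        (Real.exp (-(3 * H₀ * s)) * -(3 * H₀)) s := (Real.hasDerivAt_exp _).comp s h0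
    have e2 := ((hd1 s).hasDerivAt.add (e1.const_mul A)).add
      (by simpa using (hasDerivAt_id s).const_mul k)
    refine e2.congr_deriv ?_
    rw [hg s, hA]
    field_simp
    ring
  set B : ℝ := φ 0 + A with hB
  have hφt : ∀ t, φ t = B - A * Real.exp (-(3 * H₀ * t)) - k * t := by
    intro t
    have hconst := is_const_of_deriv_eq_zero
      (f := fun s => φ s + A * Real.exp (-(3 * H₀ * s)) + k * s)
      (fun s => (hhd s).differentiableAt) (fun s => (hhd s).deriv) t 0
    simp only [mul_zero, neg_zero, Real.exp_zero, mul_one] at hconst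
    rw [hB]; linarith
  -- case analysis on A
  rcases le_or_gt A 0 with hA0 | hA0
  · -- φ t ≥ B - k t → ∞ as t → -∞
    refine ⟨min 0 ((B - M - 1) / k), min_le_left _ _, ?_⟩
    set t := min 0 ((B - M - 1) / k) with ht
    have h1 : k * t ≤ B - M - 1 := by
      have : t ≤ (B - M - 1) / k := min_le_right _ _
      calc k * t ≤ k * ((B - M - 1) / k) := by nlinarith
      _ = B - M - 1 := by field_simp
    have h2 : 0 < Real.exp (-(3 * H₀ * t)) := Real.exp_pos _
    have h3 : φ t ≥ B - k * t := by
      rw [hφt t]; nlinarith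
    have : φ t > M := by linarith
    rw [abs_of_pos (by linarith)]; exact this
  · -- A > 0 : φ t → -∞ as t → -∞
    set b : ℝ := k / (3 * H₀) with hb
    have hb0 : 0 < b := div_pos hk0 (by linarith)
    set x : ℝ := max (4 * (b + 1) / A) (max (B + M + 1) 1) with hx
    have hx1 : (1:ℝ) ≤ x := le_trans (le_max_right _ _) (le_max_right _ _)
    have hx0 : 0 < x := by linarith
    have hxA : 4 * (b + 1) / A ≤ x := le_max_left _ _
    have hxB : B + M + 1 ≤ x := le_trans (le_max_left _ _) (le_max_right _ _)
    refine ⟨-x / (3 * H₀), by apply div_nonpos_of_nonpos_of_nonneg <;> linarith, ?_⟩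
    set t : ℝ := -x / (3 * H₀) with ht
    have hexp : -(3 * H₀ * t) = x := by rw [ht]; field_simp
    have hquad : x ^ 2 / 4 ≤ Real.exp x := by
      have h1 : x / 2 + 1 ≤ Real.exp (x / 2) := Real.add_one_le_exp _
      have h2 : Real.exp (x / 2) * Real.exp (x / 2) = Real.exp x := by
        rw [← Real.exp_add]; ring_nf
      nlinarith [Real.exp_pos (x / 2)]
    have hAx : 4 * (b + 1) ≤ A * x := by
      rw [div_le_iff₀ hA0] at hxA; linarith [hxA]
    have hkt : k * t = -(b * x) := by rw [ht, hb]; field_simp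
    have hφle : φ t ≤ B - A * x ^ 2 / 4 + b * x := by
      rw [hφt t, hexp, hkt]
      nlinarith [hquad, hA0.le]
    have hbig : A * x ^ 2 / 4 - b * x ≥ x := by nlinarith
    have : φ t ≤ -(M + 1) := by
      have : φ t ≤ B - x := by linarith
      linarith
    rw [abs_of_neg (by linarith)]; linarith
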